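/- For every context-free game G=(Σ,R,T) and every regular one-pass strategy σ_A given by a strategy automaton A, the winning set W(σ_A) is a regular language over Σ. -/

import Mathlib

namespace CFG

/-- Juliet's two kinds of moves. -/
inductive JMove : Type
  | call : JMove
  | read : JMove
deriving DecidableEq

/-- The extended alphabet Σ̂: `Sum.inl a` is the plain symbol `a`,
`Sum.inr a` is the "called" copy `â`. -/
abbrev HSym (A : Type) : Type := A ⊕ A

/-- The homomorphism ♮ deleting called symbols. -/
def flat {A : Type} (α : List (HSym A)) : List A :=
  α.filterMap (fun x => match x with | Sum.inl a => some a | Sum.inr _ => none)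

/-- A context-free game: a (minimal) DFA `T` over `A` with finite state set `Q`,
and a replacement relation `R` with nonempty replacement words and regular
replacement languages. -/
structure CFGame (A : Type) where
  Q : Type
  fintypeQ : Fintype Q
  T : DFA A Q
  minimal_reachable : ∀ q : Q, ∃ w : List A, T.evalFrom T.start w = q
  minimal_distinguishable :
    ∀ q q' : Q, (∀ w : List A, T.evalFrom q w ∈ T.accept ↔ T.evalFrom q' w ∈ T.accept) → q = q'
  R : A → List A → Prop
  R_ne : ∀ a v, R a v → v ≠ []
  R_regular : ∀ a, Language.IsRegular {v : List A | R a v}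

variable {A : Type}

/-- `a` is a function symbol (its replacement language is nonempty). -/
def CFGame.Fn (G : CFGame A) (a : A) : Prop := ∃ v, G.R a v

/-- One-pass strategies of Juliet (values at non-function symbols are irrelevant). -/
abbrev JStrat (A : Type) : Type := List (HSym A) → A → JMove

/-- Strategies of Romeo (values at non-function symbols are irrelevant). -/
abbrev RStrat (A : Type) : Type := List (HSym A) → A → List A

/-- Validity of a Romeo strategy: replacement words belong to the replacement language. -/
def CFGame.RValid (G : CFGame A) (τ : RStrat A) : Prop :=
  ∀ (α : List (HSym A)) (a : A), G.Fn a → G.R a (τ α a)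

/-- Configurations, instrumented for depth bookkeeping: a history string, the
remaining string where every symbol is annotated with its call-nesting level,
and the maximal nesting depth of the `Call` moves played so far. -/
abbrev Config (A : Type) : Type := List (HSym A) × List (A × ℕ) × ℕ

/-- One step of a play: Juliet reads or calls the current symbol according to `σ`
(a call is only possible at a function symbol); a call is answered by `τ`. -/
noncomputable def CFGame.step (G : CFGame A) (σ : JStrat A) (τ : RStrat A) :
    Config A → Config A :=
  fun c =>
    match c with
    | (α, [], d) => (α, [], d)
    | (α, (a, k) :: v, d) =>
      letI := Classical.propDecidable (G.Fn a ∧ σ α a = JMove.call)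
      if G.Fn a ∧ σ α a = JMove.call then
        (α ++ [Sum.inr a], (τ α a).map (fun b => (b, k + 1)) ++ v, max d (k + 1))
      else (α ++ [Sum.inl a], v, d)

/-- The play of `σ` against `τ` on input word `w`, as the sequence of its
configurations (the configuration stays fixed once the remaining string is empty). -/
noncomputable def CFGame.play (G : CFGame A) (σ : JStrat A) (τ : RStrat A)
    (w : List A) (n : ℕ) : Config A :=
  (G.step σ τ)^[n] ([], w.map (fun a => (a, 0)), 0)

/-- `σ` wins on `w`: against every (valid) Romeo strategy, the play on `w` is
finite and its final string belongs to the target language. -/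
def CFGame.WinsOn (G : CFGame A) (σ : JStrat A) (w : List A) : Prop :=
  ∀ τ : RStrat A, G.RValid τ →
    ∃ n : ℕ, (G.play σ τ w n).2.1 = [] ∧
      G.T.evalFrom G.T.start (flat (G.play σ τ w n).1) ∈ G.T.accept

/-- The winning set `W(σ)`. -/
def CFGame.W (G : CFGame A) (σ : JStrat A) : Set (List A) := {w | G.WinsOn σ w}

/-- `σ` is terminating: every play of `σ` is finite. -/
def CFGame.Terminating (G : CFGame A) (σ : JStrat A) : Prop :=
  ∀ τ : RStrat A, G.RValid τ → ∀ w : List A, ∃ n : ℕ, (G.play σ τ w n).2.1 = []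

/-- `σ` is dominant: it dominates every one-pass strategy. -/
def CFGame.Dominant (G : CFGame A) (σ : JStrat A) : Prop :=
  ∀ σ' : JStrat A, G.W σ' ⊆ G.W σ

/-- `σ` is undominated: no one-pass strategy strictly dominates it. -/
def CFGame.Undominated (G : CFGame A) (σ : JStrat A) : Prop :=
  ¬ ∃ σ' : JStrat A, G.W σ ⊂ G.W σ'

/-- `σ` is forgetful: its decisions only depend on `♮α` and the current symbol. -/
def CFGame.Forgetful (G : CFGame A) (σ : JStrat A) : Prop :=
  ∀ (α β : List (HSym A)) (a : A), G.Fn a → flat α = flat β → σ α a = σ β a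

/-- `σ` is regular: the language `{αa : σ(α,a) = Call}` over Σ̂ is regular. -/
def CFGame.RegularStrat (G : CFGame A) (σ : JStrat A) : Prop :=
  Language.IsRegular
    {x : List (HSym A) | ∃ (α : List (HSym A)) (a : A),
      G.Fn a ∧ σ α a = JMove.call ∧ x = α ++ [Sum.inl a]}

/-- One step of a strategy automaton of a strongly regular strategy, on the state
set `Q ∪ {Call}` (`none` is the absorbing state `Call`). -/
def optStep {Q : Type} (δA : Q → A → Option Q) (o : Option Q) (a : A) : Option Q :=
  o.bind (fun q => δA q a)

/-- `σ` is strongly regular: given by an automaton obtained from `T` by rerouting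
some transitions to a new accepting state `Call`; Juliet plays `Call` on `(α,a)`
iff the automaton maps `♮α·a` to `Call`. -/
def CFGame.StronglyRegular (G : CFGame A) (σ : JStrat A) : Prop :=
  ∃ δA : G.Q → A → Option G.Q,
    (∀ q a, δA q a = some (G.T.step q a) ∨ δA q a = none) ∧
    ∀ (α : List (HSym A)) (a : A), G.Fn a →
      (σ α a = JMove.call ↔
        List.foldl (optStep δA) (some G.T.start) (flat α ++ [a]) = none)

/-- Shortlex (strict) order on words. -/
def shortLex [LinearOrder A] (v w : List A) : Prop :=
  v.length < w.length ∨ (v.length = w.length ∧ List.Lex (· < ·) v w)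

/-- `V <_sl W` for sets of words: the shortlex-least word of the symmetric
difference belongs to `W`. -/
def slLT [LinearOrder A] (V W : Set (List A)) : Prop :=
  ∃ w : List A, w ∈ W ∧ w ∉ V ∧ ∀ v : List A, shortLex v w → (v ∈ V ↔ v ∈ W)

/-- `V ≤_sl W` for sets of words. -/
def slLE [LinearOrder A] (V W : Set (List A)) : Prop := V = W ∨ slLT V W

/-- `σ` is weakly dominant: `W(σ') ≤_sl W(σ)` for every one-pass strategy `σ'`. -/
def CFGame.WeaklyDominant [LinearOrder A] (G : CFGame A) (σ : JStrat A) : Prop :=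
  ∀ σ' : JStrat A, slLE (G.W σ') (G.W σ)

/-- The bounded depth property. -/
def CFGame.BoundedDepthProperty (G : CFGame A) : Prop :=
  ∃ B : ℕ → ℕ, ∀ σ : JStrat A, ∀ k : ℕ, ∃ σk : JStrat A,
    ∀ w ∈ G.W σ, w.length ≤ k →
      G.WinsOn σk w ∧
      ∀ τ : RStrat A, G.RValid τ → ∀ n : ℕ, (G.play σk τ w n).2.2 ≤ B w.length

/-- Prefix-freeness of all replacement languages. -/
def CFGame.PrefixFree (G : CFGame A) : Prop :=
  ∀ (a : A) (u v : List A), G.R a u → G.R a v → u <+: v → u = v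

/-- Non-recursiveness: no function symbol can be derived from itself. -/
def CFGame.NonRecursive (G : CFGame A) : Prop :=
  ¬ ∃ (n : ℕ) (f : ℕ → A), 1 ≤ n ∧ f 0 = f n ∧ (∀ i ≤ n, G.Fn (f i)) ∧
    ∀ k < n, ∃ v : List A, G.R (f k) v ∧ f (k + 1) ∈ v

/-- `σ` is almost undominated: only finitely many words are lost by `σ` but won
by some strategy dominating `σ`. -/
def CFGame.AlmostUndominated (G : CFGame A) (σ : JStrat A) : Prop :=
  Set.Finite {w : List A | ¬ G.WinsOn σ w ∧
    ∃ σ' : JStrat A, G.W σ ⊆ G.W σ' ∧ G.WinsOn σ' w}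

/-- Convergence of a sequence of one-pass strategies. -/
def Converges (G : CFGame A) (σs : ℕ → JStrat A) (σ : JStrat A) : Prop :=
  ∀ n : ℕ, ∃ k0 : ℕ, ∀ k ≥ k0, ∀ α : List (HSym A), α.length ≤ n →
    ∀ a : A, G.Fn a → σ α a = σs k α a

/-- The one-pass strategy defined by a DFA `M` over Σ̂ (a strategy automaton):
play `Call` on `(α,a)` iff `M` accepts `α·a`. -/
noncomputable def autoStrat {S : Type} (M : DFA (HSym A) S) : JStrat A :=
  fun α a =>
    letI := Classical.propDecidable (M.eval (α ++ [Sum.inl a]) ∈ M.accept)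
    if M.eval (α ++ [Sum.inl a]) ∈ M.accept then JMove.call else JMove.read

/-- `States(q; w, σ)`: the `T`-states `δ*(q, ♮α)` over final history strings `α`
of plays of `σ` on `w`. -/
def CFGame.StatesOf (G : CFGame A) (σ : JStrat A) (q : G.Q) (w : List A) : Set G.Q :=
  {q' | ∃ τ : RStrat A, G.RValid τ ∧ ∃ n : ℕ,
    (G.play σ τ w n).2.1 = [] ∧ G.T.evalFrom q (flat (G.play σ τ w n).1) = q'}

/-- `(p, a, S)` is an effect triple of `σ`. -/
def CFGame.IsEffectTriple (G : CFGame A) (σ : JStrat A) (t : G.Q × A × Set G.Q) : Prop :=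
  G.StatesOf σ t.1 [t.2.1] ⊆ t.2.2

/-- An effect triple is trivial if `δ(p,a) ∈ S`. -/
def CFGame.TrivialTriple (G : CFGame A) (t : G.Q × A × Set G.Q) : Prop :=
  G.T.step t.1 t.2.1 ∈ t.2.2

/-- The substrategy `σ^α`. -/
def subStrat (σ : JStrat A) (α : List (HSym A)) : JStrat A :=
  fun β a => σ (α ++ β) a

/-- The effect set `E(σ)`: all effect triples of all substrategies of `σ`. -/
def CFGame.EffectSet (G : CFGame A) (σ : JStrat A) : Set (G.Q × A × Set G.Q) :=
  {t | ∃ α : List (HSym A), G.IsEffectTriple (subStrat σ α) t}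

/-- The transition relation of the NFA `N_E` associated with a set `E` of effect
triples (state set `P(Q)`, initial state `{s}`, accepting states the subsets of `F`). -/
def CFGame.NEStep (G : CFGame A) (E : Set (G.Q × A × Set G.Q))
    (S : Set G.Q) (a : A) (S' : Set G.Q) : Prop :=
  ∀ p ∈ S, ∃ S'' : Set G.Q, S'' ⊆ S' ∧ (p, a, S'') ∈ E

/-- A strategy for the online word problem `OnlineNFA(N_E)`. -/
def CFGame.NEOnlineStrat (G : CFGame A) (E : Set (G.Q × A × Set G.Q))
    (ρ : List A → Set G.Q) : Prop :=
  ρ [] = {G.T.start} ∧ ∀ (w : List A) (a : A), G.NEStep E (ρ w) a (ρ (w ++ [a]))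

/-- The winning set of a strategy for `OnlineNFA(N_E)`. -/
def CFGame.NEWins (G : CFGame A) (ρ : List A → Set G.Q) : Set (List A) :=
  {w | ρ w ⊆ G.T.accept}

/-- A strategy automaton `M` is `(p,a,St)`-inducing. -/
def CFGame.Inducing (G : CFGame A) {S : Type} (M : DFA (HSym A) S)
    (p : G.Q) (a : A) (St : Set G.Q) : Prop :=
  G.Terminating (autoStrat M) ∧ G.Fn a ∧
  (∀ u : List A, G.R a u → G.StatesOf (autoStrat M) p u ⊆ St) ∧
  ∃ QA : G.Q → Set S,
    (∀ q ∈ St, ∀ q' ∈ St, q ≠ q' → Disjoint (QA q) (QA q')) ∧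
    ∀ u : List A, G.R a u → ∀ τ : RStrat A, G.RValid τ → ∀ n : ℕ,
      (G.play (autoStrat M) τ u n).2.1 = [] →
      ((∀ q ∈ St,
          (M.eval (G.play (autoStrat M) τ u n).1 ∈ QA q ↔
            G.T.evalFrom p (flat (G.play (autoStrat M) τ u n).1) = q)) ∧
        ∀ β : List (HSym A), β <+: (G.play (autoStrat M) τ u n).1 →
          β ≠ (G.play (autoStrat M) τ u n).1 → ∀ r ∈ St, M.eval β ∉ QA r)


-- lemma development part 1
section Dev
variable {A : Type} (G : CFGame A) (σ : JStrat A) (τ τ' : RStrat A)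

lemma step_of_nil (c : Config A) (h : c.2.1 = []) : G.step σ τ c = c := by
  obtain ⟨α, v, d⟩ := c
  simp only at h
  subst h
  rfl

lemma step_cons_call {α : List (HSym A)} {a : A} {k : ℕ} {v : List (A × ℕ)} {d : ℕ}
    (h : G.Fn a ∧ σ α a = JMove.call) :
    G.step σ τ (α, (a, k) :: v, d) =
      (α ++ [Sum.inr a], (τ α a).map (fun b => (b, k + 1)) ++ v, max d (k + 1)) := by
  simp only [CFGame.step]
  rw [if_pos h]

lemma step_cons_read {α : List (HSym A)} {a : A} {k : ℕ} {v : List (A × ℕ)} {d : ℕ}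
    (h : ¬ (G.Fn a ∧ σ α a = JMove.call)) :
    G.step σ τ (α, (a, k) :: v, d) = (α ++ [Sum.inl a], v, d) := by
  simp only [CFGame.step]
  rw [if_neg h]

lemma play_succ (w : List A) (n : ℕ) :
    G.play σ τ w (n + 1) = G.step σ τ (G.play σ τ w n) :=
  Function.iterate_succ_apply' _ _ _

lemma play_add (w : List A) (n m : ℕ) :
    G.play σ τ w (n + m) = (G.step σ τ)^[m] (G.play σ τ w n) := by
  rw [CFGame.play, Nat.add_comm, Function.iterate_add_apply]
  rfl

lemma play_stable (w : List A) (n m : ℕ) (h : (G.play σ τ w n).2.1 = []) :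
    G.play σ τ w (n + m) = G.play σ τ w n := by
  induction m with
  | zero => rfl
  | succ m ih => rw [← Nat.add_assoc, play_succ, ih, step_of_nil _ _ _ _ h]

end Dev
section Dev2
variable {A : Type} (G : CFGame A) (σ : JStrat A) (τ τ' : RStrat A)

lemma play_hist_len (w : List A) :
    ∀ n, (∀ j < n, (G.play σ τ w j).2.1 ≠ []) → ((G.play σ τ w n).1).length = n := by
  intro n
  induction n with
  | zero => intro _; rfl
  | succ n ih =>
    intro h
    have hne : (G.play σ τ w n).2.1 ≠ [] := h n (Nat.lt_succ_self n)
    obtain ⟨⟨a, k⟩, v, hv⟩ := List.exists_cons_of_ne_nil hne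
    have hc : G.play σ τ w n = ((G.play σ τ w n).1, (a, k) :: v, (G.play σ τ w n).2.2) := by
      rw [← hv]
    rw [play_succ, hc]
    by_cases hcall : G.Fn a ∧ σ (G.play σ τ w n).1 a = JMove.call
    · rw [step_cons_call _ _ _ hcall]
      simp [ih (fun j hj => h j (Nat.lt_succ_of_lt hj))]
    · rw [step_cons_read _ _ _ hcall]
      simp [ih (fun j hj => h j (Nat.lt_succ_of_lt hj))]

lemma play_tau_congr (w : List A) :
    ∀ n, (∀ k < n, ∀ a, τ' (G.play σ τ w k).1 a = τ (G.play σ τ w k).1 a) →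
      G.play σ τ' w n = G.play σ τ w n := by
  intro n
  induction n with
  | zero => intro _; rfl
  | succ n ih =>
    intro h
    have heq := ih (fun k hk => h k (Nat.lt_succ_of_lt hk))
    rw [play_succ, play_succ, heq]
    set c := G.play σ τ w n with hc
    rcases hv : c.2.1 with _ | ⟨⟨a, k⟩, v⟩
    · rw [step_of_nil _ _ _ _ hv, step_of_nil _ _ _ _ hv]
    · have hce : c = (c.1, (a, k) :: v, c.2.2) := by rw [← hv]
      rw [hce]
      by_cases hcall : G.Fn a ∧ σ c.1 a = JMove.call
      · rw [step_cons_call _ _ _ hcall, step_cons_call _ _ _ hcall,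
          h n (Nat.lt_succ_self n) a]
      · rw [step_cons_read _ _ _ hcall, step_cons_read _ _ _ hcall]

lemma play_append (w z : List A) :
    ∀ n, (∀ k < n, (G.play σ τ w k).2.1 ≠ []) →
      (G.play σ τ (w ++ z) n).1 = (G.play σ τ w n).1 ∧
      (G.play σ τ (w ++ z) n).2.1 = (G.play σ τ w n).2.1 ++ z.map (fun a => (a, 0)) := by
  intro n
  induction n with
  | zero =>
    intro _
    constructor
    · rfl
    · show ((w ++ z).map fun a => (a, 0)) = (w.map fun a => (a, 0)) ++ (z.map fun a => (a, 0))
      exact List.map_append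
  | succ n ih =>
    intro h
    obtain ⟨ih1, ih2⟩ := ih (fun k hk => h k (Nat.lt_succ_of_lt hk))
    have hne : (G.play σ τ w n).2.1 ≠ [] := h n (Nat.lt_succ_self n)
    obtain ⟨⟨a, k⟩, v, hv⟩ := List.exists_cons_of_ne_nil hne
    have hcw : G.play σ τ w n = ((G.play σ τ w n).1, (a, k) :: v, (G.play σ τ w n).2.2) := by
      rw [← hv]
    have hcwz : G.play σ τ (w ++ z) n =
        ((G.play σ τ w n).1, (a, k) :: (v ++ z.map (fun a => (a, 0))),
          (G.play σ τ (w ++ z) n).2.2) := by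
      have : G.play σ τ (w ++ z) n =
          ((G.play σ τ (w ++ z) n).1, (G.play σ τ (w ++ z) n).2.1,
            (G.play σ τ (w ++ z) n).2.2) := rfl
      rw [this, ih1, ih2, hv]
      rfl
    rw [play_succ, play_succ, hcw, hcwz]
    by_cases hcall : G.Fn a ∧ σ (G.play σ τ w n).1 a = JMove.call
    · rw [step_cons_call _ _ _ hcall, step_cons_call _ _ _ hcall]
      simp
    · rw [step_cons_read _ _ _ hcall, step_cons_read _ _ _ hcall]
      simp

end Dev2
section Dev3
variable {A : Type} (G : CFGame A) (σ : JStrat A)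

lemma flat_append (α β : List (HSym A)) : flat (α ++ β) = flat α ++ flat β :=
  List.filterMap_append

lemma call_char {S : Type} (M : DFA (HSym A) S)
    (hM : M.accepts = {x : List (HSym A) | ∃ (α : List (HSym A)) (a : A),
      G.Fn a ∧ σ α a = JMove.call ∧ x = α ++ [Sum.inl a]})
    (δ : List (HSym A)) (a : A) (ha : G.Fn a) :
    σ δ a = JMove.call ↔ δ ++ [Sum.inl a] ∈ M.accepts := by
  rw [hM]
  constructor
  · intro hc
    exact ⟨δ, a, ha, hc, rfl⟩
  · rintro ⟨α', a', h1, h2, h3⟩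
    obtain ⟨hδ, hs⟩ := List.append_inj' h3 rfl
    obtain rfl : a' = a := by
      have := List.head_eq_of_cons_eq hs.symm
      exact Sum.inl.inj this
    rw [hδ]
    exact h2

lemma bisim {S : Type} (M : DFA (HSym A) S)
    (hσ : ∀ (δ : List (HSym A)) (a : A), G.Fn a →
      (σ δ a = JMove.call ↔ δ ++ [Sum.inl a] ∈ M.accepts))
    (τ τ' : RStrat A) (α β : List (HSym A))
    (hMeq : M.eval α = M.eval β)
    (hτ : ∀ (γ : List (HSym A)) (a : A), τ' (α ++ γ) a = τ (β ++ γ) a) :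
    ∀ (m : ℕ) (v : List (A × ℕ)) (d d' : ℕ),
      ∃ (γ : List (HSym A)) (u : List (A × ℕ)),
        ((G.step σ τ')^[m] (α, v, d)).1 = α ++ γ ∧
        ((G.step σ τ')^[m] (α, v, d)).2.1 = u ∧
        ((G.step σ τ)^[m] (β, v, d')).1 = β ++ γ ∧
        ((G.step σ τ)^[m] (β, v, d')).2.1 = u := by
  intro m
  induction m with
  | zero =>
    intro v d d'
    exact ⟨[], v, by simp, rfl, by simp, rfl⟩
  | succ m ih =>
    intro v d d'
    obtain ⟨γ, u, h1, h2, h3, h4⟩ := ih v d d'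
    rw [Function.iterate_succ_apply', Function.iterate_succ_apply']
    set c1 := (G.step σ τ')^[m] (α, v, d) with hc1
    set c2 := (G.step σ τ)^[m] (β, v, d') with hc2
    rcases hu : u with _ | ⟨⟨a, k⟩, u'⟩
    · refine ⟨γ, [], ?_⟩
      rw [step_of_nil _ _ _ _ (by rw [h2, hu]), step_of_nil _ _ _ _ (by rw [h4, hu])]
      exact ⟨h1, by rw [h2, hu], h3, by rw [h4, hu]⟩
    · have hce1 : c1 = (α ++ γ, (a, k) :: u', c1.2.2) := by
        rw [show c1 = (c1.1, c1.2.1, c1.2.2) from rfl, h1, h2, hu]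
      have hce2 : c2 = (β ++ γ, (a, k) :: u', c2.2.2) := by
        rw [show c2 = (c2.1, c2.2.1, c2.2.2) from rfl, h3, h4, hu]
      have hiff : (G.Fn a ∧ σ (α ++ γ) a = JMove.call) ↔
          (G.Fn a ∧ σ (β ++ γ) a = JMove.call) := by
        constructor
        · rintro ⟨hFn, hc⟩
          refine ⟨hFn, ?_⟩
          rw [hσ _ _ hFn] at hc ⊢
          rw [DFA.mem_accepts] at hc ⊢
          rw [show β ++ γ ++ [Sum.inl a] = β ++ (γ ++ [Sum.inl a]) by simp,
            DFA.eval, DFA.evalFrom_of_append, ← DFA.eval, ← hMeq]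
          rw [show α ++ γ ++ [Sum.inl a] = α ++ (γ ++ [Sum.inl a]) by simp,
            DFA.eval, DFA.evalFrom_of_append, ← DFA.eval] at hc
          exact hc
        · rintro ⟨hFn, hc⟩
          refine ⟨hFn, ?_⟩
          rw [hσ _ _ hFn] at hc ⊢
          rw [DFA.mem_accepts] at hc ⊢
          rw [show α ++ γ ++ [Sum.inl a] = α ++ (γ ++ [Sum.inl a]) by simp,
            DFA.eval, DFA.evalFrom_of_append, ← DFA.eval, hMeq]
          rw [show β ++ γ ++ [Sum.inl a] = β ++ (γ ++ [Sum.inl a]) by simp,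
            DFA.eval, DFA.evalFrom_of_append, ← DFA.eval] at hc
          exact hc
      by_cases hcall : G.Fn a ∧ σ (α ++ γ) a = JMove.call
      · have hcall2 := hiff.mp hcall
        rw [hce1, hce2, step_cons_call _ _ _ hcall, step_cons_call _ _ _ hcall2]
        refine ⟨γ ++ [Sum.inr a], (τ' (α ++ γ) a).map (fun b => (b, k + 1)) ++ u',
          by simp, rfl, by simp, by rw [hτ γ a]⟩
      · have hcall2 : ¬ (G.Fn a ∧ σ (β ++ γ) a = JMove.call) := fun hh => hcall (hiff.mpr hh)
        rw [hce1, hce2, step_cons_read _ _ _ hcall, step_cons_read _ _ _ hcall2]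
        exact ⟨γ ++ [Sum.inl a], u', by simp, rfl, by simp, rfl⟩

end Dev3
section MN
variable {A : Type}

theorem isRegular_of_classifier (L : Language A) (X : Type) [Finite X]
    (k : List A → X)
    (hk : ∀ w w', k w = k w' → ∀ z, ((w ++ z) ∈ L ↔ (w' ++ z) ∈ L)) :
    L.IsRegular := by
  classical
  set q : List A → Language A := fun w => {z | (w ++ z) ∈ L} with hq
  have hqk : ∀ w w', k w = k w' → q w = q w' := by
    intro w w' h
    ext z
    exact hk w w' h z
  -- range of q is finite
  set F : X → Language A := fun x => if h : ∃ w, k w = x then q h.choose else (∅ : Set (List A)) with hF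
  have hqF : ∀ w, q w = F (k w) := by
    intro w
    have hex : ∃ w', k w' = k w := ⟨w, rfl⟩
    rw [hF]
    simp only [dif_pos hex]
    exact (hqk _ _ hex.choose_spec).symm.trans (by exact (@dif_pos (∃ w', k w' = k w) _ hex (Set (List A)) (fun h => q h.choose) (fun _ => ∅)).symm)
  have hfin : (Set.range q).Finite := by
    apply Set.Finite.subset (Set.finite_range F)
    rintro _ ⟨w, rfl⟩
    exact ⟨k w, (hqF w).symm⟩
  haveI : Finite (Set.range q) := hfin.to_subtype
  haveI : Fintype (Set.range q) := Fintype.ofFinite _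
  -- build the DFA
  have hstep : ∀ (s : Set.range q) (a : A), {z | a :: z ∈ (s : Language A)} ∈ Set.range q := by
    rintro ⟨_, w, rfl⟩ a
    refine ⟨w ++ [a], ?_⟩
    ext z
    show (w ++ [a] ++ z) ∈ L ↔ (w ++ (a :: z)) ∈ L
    rw [List.append_assoc]
    rfl
  set M : DFA A (Set.range q) := {
    step := fun s a => ⟨{z | a :: z ∈ (s : Language A)}, hstep s a⟩
    start := ⟨q [], ⟨[], rfl⟩⟩
    accept := {s | [] ∈ (s : Language A)} } with hMdef
  have heval : ∀ (x w : List A), M.evalFrom ⟨q w, ⟨w, rfl⟩⟩ x = ⟨q (w ++ x), ⟨w ++ x, rfl⟩⟩ := by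
    intro x
    induction x with
    | nil => intro w; simp
    | cons a x ih =>
      intro w
      have hstepeq : M.step ⟨q w, ⟨w, rfl⟩⟩ a = ⟨q (w ++ [a]), ⟨w ++ [a], rfl⟩⟩ := by
        apply Subtype.ext
        show {z | a :: z ∈ q w} = q (w ++ [a])
        ext z
        show (w ++ (a :: z)) ∈ L ↔ (w ++ [a] ++ z) ∈ L
        rw [List.append_assoc]
        rfl
      show M.evalFrom (M.step ⟨q w, ⟨w, rfl⟩⟩ a) x = _
      rw [hstepeq, ih (w ++ [a])]
      simp
  refine ⟨Set.range q, inferInstance, M, ?_⟩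
  ext x
  rw [DFA.mem_accepts]
  show M.evalFrom ⟨q [], ⟨[], rfl⟩⟩ x ∈ M.accept ↔ x ∈ L
  rw [heval x []]
  show [] ∈ q ([] ++ x) ↔ x ∈ L
  show x ++ [] ∈ L ↔ x ∈ L
  rw [List.append_nil]

end MN

theorem statement18 {A : Type} [Fintype A] (G : CFGame A) (σ : JStrat A)
    (h : G.RegularStrat σ) :
    Language.IsRegular {w : List A | G.WinsOn σ w} := by
  classical
  unfold CFGame.RegularStrat Language.IsRegular at h
  obtain ⟨SM, fSM, M, hM⟩ := h
  haveI := G.fintypeQ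
  haveI := fSM
  have hσcall : ∀ (δ : List (HSym A)) (a : A), G.Fn a →
      (σ δ a = JMove.call ↔ δ ++ [Sum.inl a] ∈ M.accepts) := call_char G σ M hM
  set Dp : List A → Prop := fun w =>
    ∃ τ : RStrat A, G.RValid τ ∧ ∀ n, (G.play σ τ w n).2.1 ≠ [] with hDp
  set Sp : List A → Set (SM × G.Q) := fun w => {p | ∃ τ : RStrat A, G.RValid τ ∧ ∃ n,
      (G.play σ τ w n).2.1 = [] ∧ M.eval (G.play σ τ w n).1 = p.1 ∧
      G.T.evalFrom G.T.start (flat (G.play σ τ w n).1) = p.2} with hSp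
  have main : ∀ w w', Dp w = Dp w' → Sp w = Sp w' → ∀ z,
      G.WinsOn σ (w ++ z) → G.WinsOn σ (w' ++ z) := by
    intro w w' hD hS z hwin τ hτv
    -- no divergence on w
    have hnD : ¬ Dp w := by
      rintro ⟨τ₀, hv0, hne0⟩
      obtain ⟨n, hemp, -⟩ := hwin τ₀ hv0
      have hA := play_append G σ τ₀ w z n (fun k _ => hne0 k)
      rw [hA.2] at hemp
      exact hne0 n (List.append_eq_nil_iff.mp hemp).1
    have hnD' : ¬ Dp w' := hD ▸ hnD
    have hterm : ∃ n, (G.play σ τ w' n).2.1 = [] := by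
      by_contra hcon
      push_neg at hcon
      exact hnD' ⟨τ, hτv, hcon⟩
    set N := Nat.find hterm with hN
    have hNemp : (G.play σ τ w' N).2.1 = [] := Nat.find_spec hterm
    have hNmin : ∀ k < N, (G.play σ τ w' k).2.1 ≠ [] := fun k hk => Nat.find_min hterm hk
    set β := (G.play σ τ w' N).1 with hβ
    have hpmem : (M.eval β, G.T.evalFrom G.T.start (flat β)) ∈ Sp w' :=
      ⟨τ, hτv, N, hNemp, rfl, rfl⟩
    rw [← hS] at hpmem
    obtain ⟨τ₁, hτ₁v, n₁', hemp₁', hp1, hp2⟩ := hpmem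
    have hterm₁ : ∃ n, (G.play σ τ₁ w n).2.1 = [] := ⟨n₁', hemp₁'⟩
    set n₁ := Nat.find hterm₁ with hn₁
    have h1emp : (G.play σ τ₁ w n₁).2.1 = [] := Nat.find_spec hterm₁
    have h1min : ∀ k < n₁, (G.play σ τ₁ w k).2.1 ≠ [] := fun k hk => Nat.find_min hterm₁ hk
    have hstab : G.play σ τ₁ w n₁' = G.play σ τ₁ w n₁ := by
      have hle : n₁ ≤ n₁' := Nat.find_min' hterm₁ hemp₁'
      obtain ⟨m, rfl⟩ := Nat.exists_eq_add_of_le hle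
      exact play_stable G σ τ₁ w n₁ m h1emp
    set α := (G.play σ τ₁ w n₁).1 with hα
    have hMeq : M.eval α = M.eval β := by
      have := hp1
      rw [hstab] at this
      exact this
    have hTeq : G.T.evalFrom G.T.start (flat α) = G.T.evalFrom G.T.start (flat β) := by
      have := hp2
      rw [hstab] at this
      exact this
    have hlenα : α.length = n₁ := play_hist_len G σ τ₁ w n₁ h1min
    set τs : RStrat A := fun δ a =>
      if α <+: δ then τ (β ++ δ.drop α.length) a else τ₁ δ a with hτs
    have hτsv : G.RValid τs := by
      intro δ a ha
      simp only [hτs]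
      by_cases hpre : α <+: δ
      · rw [if_pos hpre]; exact hτv _ _ ha
      · rw [if_neg hpre]; exact hτ₁v _ _ ha
    have hps : ∀ n ≤ n₁, G.play σ τs w n = G.play σ τ₁ w n := by
      intro n hn
      apply play_tau_congr
      intro k hk a
      have hlen : ((G.play σ τ₁ w k).1).length = k :=
        play_hist_len G σ τ₁ w k (fun j hj => h1min j (lt_of_lt_of_le (hj.trans hk) hn))
      have hnp : ¬ (α <+: (G.play σ τ₁ w k).1) := by
        intro hpre
        have := hpre.length_le
        omega
      simp only [hτs, if_neg hnp]
    have hτeq : ∀ (γ : List (HSym A)) (a : A), τs (α ++ γ) a = τ (β ++ γ) a := by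
      intro γ a
      simp only [hτs, if_pos (List.prefix_append α γ), List.drop_left]
    -- the winning play against τs
    obtain ⟨n, hnemp, hnacc⟩ := hwin τs hτsv
    have hge : n₁ ≤ n := by
      by_contra hlt
      push_neg at hlt
      have hA := play_append G σ τs w z n (fun k hk => by
        rw [hps k (le_of_lt (hk.trans hlt))]; exact h1min k (hk.trans hlt))
      rw [hA.2] at hnemp
      have := (List.append_eq_nil_iff.mp hnemp).1
      rw [hps n (le_of_lt hlt)] at this
      exact h1min n hlt this
    obtain ⟨m, rfl⟩ := Nat.exists_eq_add_of_le hge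
    have hA1 := play_append G σ τs w z n₁ (fun k hk => by
      rw [hps k (le_of_lt hk)]; exact h1min k hk)
    have hA2 := play_append G σ τ w' z N hNmin
    have hcfg₁ : G.play σ τs (w ++ z) n₁ =
        (α, z.map (fun a => (a, 0)), (G.play σ τs (w ++ z) n₁).2.2) := by
      rw [show G.play σ τs (w ++ z) n₁ = ((G.play σ τs (w ++ z) n₁).1,
        (G.play σ τs (w ++ z) n₁).2.1, (G.play σ τs (w ++ z) n₁).2.2) from rfl]
      rw [hA1.1, hA1.2, hps n₁ le_rfl, h1emp, List.nil_append]
    have hcfg₂ : G.play σ τ (w' ++ z) N =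
        (β, z.map (fun a => (a, 0)), (G.play σ τ (w' ++ z) N).2.2) := by
      rw [show G.play σ τ (w' ++ z) N = ((G.play σ τ (w' ++ z) N).1,
        (G.play σ τ (w' ++ z) N).2.1, (G.play σ τ (w' ++ z) N).2.2) from rfl]
      rw [hA2.1, hA2.2, hNemp, List.nil_append]
    obtain ⟨γ, u, b1, b2, b3, b4⟩ := bisim G σ M hσcall τ τs α β hMeq hτeq m
      (z.map (fun a => (a, 0))) (G.play σ τs (w ++ z) n₁).2.2 (G.play σ τ (w' ++ z) N).2.2
    have e1 : G.play σ τs (w ++ z) (n₁ + m) =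
        (G.step σ τs)^[m] (α, z.map (fun a => (a, 0)), (G.play σ τs (w ++ z) n₁).2.2) := by
      rw [play_add, ← hcfg₁]
    have e2 : G.play σ τ (w' ++ z) (N + m) =
        (G.step σ τ)^[m] (β, z.map (fun a => (a, 0)), (G.play σ τ (w' ++ z) N).2.2) := by
      rw [play_add, ← hcfg₂]
    rw [e1] at hnemp hnacc
    refine ⟨N + m, ?_, ?_⟩
    · rw [e2, b4, ← b2]
      exact hnemp
    · rw [e2, b3, flat_append, DFA.evalFrom_of_append, ← hTeq, ← DFA.evalFrom_of_append,
        ← flat_append, ← b1]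
      exact hnacc
  apply isRegular_of_classifier _ (Prop × Set (SM × G.Q)) (fun w => (Dp w, Sp w))
  intro w w' hk z
  have h1 : Dp w = Dp w' := congrArg Prod.fst hk
  have h2 : Sp w = Sp w' := congrArg Prod.snd hk
  exact ⟨main w w' h1 h2 z, main w' w h1.symm h2.symm z⟩

end CFG
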